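/- Let q be a prime power and let b, n, s be positive integers with n ≥ b. For every c ∈ F_q^n, the s-fold repeated vector (c, c, …, c) ∈ F_q^{sn} (s copies of c concatenated) satisfies wt_b((c, …, c)) = s · wt_b(c). -/

import Mathlib

/-- The `b`-symbol weight of a vector `c ∈ F^n` (coordinates indexed cyclically by `ZMod n`). -/
noncomputable def bWt {n : ℕ} {F : Type*} [Zero F] (b : ℕ) (c : ZMod n → F) : ℕ :=
  Nat.card {i : ZMod n | ∃ j < b, c (i + (j : ZMod n)) ≠ 0}

/-- The `s`-fold repetition `(c, c, …, c) ∈ F^{sn}` of a vector `c ∈ F^n`. -/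
def repeatVec {n : ℕ} {F : Type*} (s : ℕ) (c : ZMod n → F) : ZMod (s * n) → F :=
  fun i => c ((i.val % n : ℕ) : ZMod n)

/-- The `s`-fold repeated vector satisfies `wt_b((c, …, c)) = s · wt_b(c)`. -/
theorem stmt7 (q b n s : ℕ) (hb : 0 < b) (hbn : b ≤ n) (hs : 0 < s)
    (F : Type*) [Field F] [Fintype F] (hF : Fintype.card F = q)
    (c : ZMod n → F) :
    bWt b (repeatVec s c) = s * bWt b c := by
  classical
  haveI : NeZero n := ⟨by omega⟩
  haveI : NeZero (s * n) := ⟨Nat.mul_ne_zero (by omega) (by omega)⟩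
  have hdvd : n ∣ s * n := ⟨s, mul_comm s n⟩
  set f : ZMod (s * n) →+* ZMod n := ZMod.castHom hdvd (ZMod n) with hf
  -- the cast formula
  have hfval : ∀ i : ZMod (s * n), f i = ((i.val % n : ℕ) : ZMod n) := by
    intro i
    rw [ZMod.natCast_mod, ZMod.natCast_val, ZMod.castHom_apply]
  have hrep : ∀ (i : ZMod (s * n)) (j : ℕ),
      repeatVec s c (i + (j : ZMod (s * n))) = c (f i + (j : ZMod n)) := by
    intro i j
    show c (((i + (j : ZMod (s * n))).val % n : ℕ) : ZMod n) = _
    rw [← hfval, map_add, map_natCast]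
  -- fiber cardinality
  have key : ∀ x : ZMod n,
      (Finset.univ.filter (fun i : ZMod (s * n) => f i = x)).card = s := by
    intro x
    refine Eq.trans ?_ (Finset.card_range s)
    apply Finset.card_bij (fun i _ => i.val / n)
    · intro i hi
      simp only [Finset.mem_range]
      exact Nat.div_lt_of_lt_mul (lt_of_lt_of_eq i.val_lt (mul_comm s n))
    · intro i hi i' hi' h
      simp only [Finset.mem_filter] at hi hi'
      have hmod : i.val % n = i'.val % n := by
        have h1 : (f i).val = (f i').val := by rw [hi.2, hi'.2]
        rwa [hfval, hfval, ZMod.val_cast_of_lt (Nat.mod_lt _ (by omega)),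
          ZMod.val_cast_of_lt (Nat.mod_lt _ (by omega))] at h1
      have : i.val = i'.val := by
        rw [← Nat.mod_add_div i.val n, ← Nat.mod_add_div i'.val n, hmod, h]
      exact ZMod.val_injective _ this
    · intro k hk
      simp only [Finset.mem_range] at hk
      have hlt : x.val + k * n < s * n := by
        have h1 : x.val < n := x.val_lt
        calc x.val + k * n < n + k * n := by omega
          _ = (k + 1) * n := by ring
          _ ≤ s * n := Nat.mul_le_mul_right n (by omega)
      refine ⟨((x.val + k * n : ℕ) : ZMod (s * n)), ?_, ?_⟩
      · simp only [Finset.mem_filter, Finset.mem_univ, true_and]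
        rw [hfval, ZMod.val_cast_of_lt hlt]
        have : (x.val + k * n) % n = x.val := by
          rw [Nat.add_mul_mod_self_right, Nat.mod_eq_of_lt x.val_lt]
        rw [this, ZMod.natCast_val, ZMod.cast_id]
      · rw [ZMod.val_cast_of_lt hlt]
        rw [Nat.add_mul_div_right _ _ (by omega : 0 < n),
          Nat.div_eq_of_lt x.val_lt, zero_add]
  -- main computation
  have hbig : bWt b (repeatVec s c)
      = (Finset.univ.filter
          (fun i : ZMod (s * n) => ∃ j < b, c (f i + (j : ZMod n)) ≠ 0)).card := by
    rw [bWt, Nat.card_eq_fintype_card, Fintype.card_subtype]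
    congr 1
    ext i
    simp only [Set.mem_setOf_eq, hrep]
  have hsmall : bWt b c
      = (Finset.univ.filter (fun x : ZMod n => ∃ j < b, c (x + (j : ZMod n)) ≠ 0)).card := by
    rw [bWt, Nat.card_eq_fintype_card, Fintype.card_subtype]
    simp only [Set.mem_setOf_eq]
  rw [hbig, hsmall]
  set t := Finset.univ.filter (fun x : ZMod n => ∃ j < b, c (x + (j : ZMod n)) ≠ 0) with ht
  rw [Finset.card_eq_sum_card_fiberwise
    (f := f) (t := t) (by
      intro i hi
      simp only [Finset.mem_coe, Finset.mem_filter, Finset.mem_univ, true_and, ht] at hi ⊢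
      exact hi)]
  have : ∀ x ∈ t, ((Finset.univ.filter
      (fun i : ZMod (s * n) => ∃ j < b, c (f i + (j : ZMod n)) ≠ 0)).filter
      (fun i => f i = x)).card = s := by
    intro x hx
    refine Eq.trans ?_ (key x)
    congr 1
    ext i
    simp only [Finset.mem_filter, Finset.mem_univ, true_and, and_iff_right_iff_imp]
    intro hfi
    simp only [Finset.mem_filter, Finset.mem_univ, true_and, ht] at hx
    rw [hfi]
    exact hx
  rw [Finset.sum_congr rfl this, Finset.sum_const, smul_eq_mul, mul_comm]
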